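/- The function x ↦ log(x²/(1 - cos(2πx))) is convex on the open interval (0, 1/2). -/

import Mathlib

open Real Set

private lemma sinp_pos {x : ℝ} (hx : x ∈ Ioo (0:ℝ) (1/2)) : 0 < Real.sin (π * x) := by
  apply Real.sin_pos_of_pos_of_lt_pi
  · have := Real.pi_pos
    nlinarith [hx.1]
  · have := Real.pi_pos
    nlinarith [hx.2, hx.1]

private lemma hd1 {x : ℝ} (hx : x ∈ Ioo (0:ℝ) (1/2)) :
    HasDerivAt (fun x : ℝ => 2*(Real.log x - Real.log (Real.sin (π*x))) - Real.log 2)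
      (2*(x⁻¹ - Real.cos (π*x)*π / Real.sin (π*x))) x := by
  have hpx : HasDerivAt (fun x : ℝ => π * x) π x := by
    simpa using (hasDerivAt_id x).const_mul π
  have hsin : HasDerivAt (fun x : ℝ => Real.sin (π*x)) (Real.cos (π*x)*π) x :=
    (Real.hasDerivAt_sin (π*x)).comp x hpx
  have hlog1 : HasDerivAt Real.log x⁻¹ x := Real.hasDerivAt_log (ne_of_gt hx.1)
  have hlog2 : HasDerivAt (fun x : ℝ => Real.log (Real.sin (π*x)))
      (Real.cos (π*x)*π / Real.sin (π*x)) x := hsin.log (ne_of_gt (sinp_pos hx))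
  simpa using ((hlog1.sub hlog2).const_mul 2).sub_const (Real.log 2)

private lemma hd2 {x : ℝ} (hx : x ∈ Ioo (0:ℝ) (1/2)) :
    HasDerivAt (fun x : ℝ => 2*(x⁻¹ - Real.cos (π*x)*π / Real.sin (π*x)))
      (2*(π^2 / Real.sin (π*x)^2 - (x^2)⁻¹)) x := by
  have hs := sinp_pos hx
  have hpx : HasDerivAt (fun x : ℝ => π * x) π x := by
    simpa using (hasDerivAt_id x).const_mul π
  have hsin : HasDerivAt (fun x : ℝ => Real.sin (π*x)) (Real.cos (π*x)*π) x :=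
    (Real.hasDerivAt_sin (π*x)).comp x hpx
  have hnum : HasDerivAt (fun x : ℝ => Real.cos (π*x)*π) (-Real.sin (π*x)*π*π) x :=
    ((Real.hasDerivAt_cos (π*x)).comp x hpx).mul_const π
  have hinv : HasDerivAt (fun x : ℝ => x⁻¹) (-(x^2)⁻¹) x := by
    simpa using hasDerivAt_inv (ne_of_gt hx.1)
  have hq := hnum.div hsin (ne_of_gt hs)
  have := ((hinv.sub hq).const_mul 2)
  refine this.congr_deriv ?_
  symm
  have hpy := Real.sin_sq_add_cos_sq (π*x)
  have hs2 : Real.sin (π*x) ≠ 0 := ne_of_gt hs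
  field_simp
  linear_combination (-(π^2)) * hpy

theorem convexOn_log_sq_div_one_sub_cos :
    ConvexOn ℝ (Set.Ioo (0 : ℝ) (1 / 2))
      (fun x : ℝ => Real.log (x ^ 2 / (1 - Real.cos (2 * Real.pi * x)))) := by
  set h : ℝ → ℝ := fun x => 2*(Real.log x - Real.log (Real.sin (π*x))) - Real.log 2 with hh
  have hopen : IsOpen (Ioo (0:ℝ) (1/2)) := isOpen_Ioo
  have hderiv : ∀ x ∈ Ioo (0:ℝ) (1/2),
      deriv h x = 2*(x⁻¹ - Real.cos (π*x)*π / Real.sin (π*x)) := fun x hx => (hd1 hx).deriv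
  have hconv : ConvexOn ℝ (Ioo (0:ℝ) (1/2)) h := by
    apply convexOn_of_deriv2_nonneg (convex_Ioo _ _)
    · exact fun x hx => (hd1 hx).differentiableAt.continuousAt.continuousWithinAt
    · rw [interior_Ioo]
      exact fun x hx => (hd1 hx).differentiableAt.differentiableWithinAt
    · rw [interior_Ioo]
      intro x hx
      have hev : deriv h =ᶠ[nhds x] (fun x => 2*(x⁻¹ - Real.cos (π*x)*π / Real.sin (π*x))) := by
        filter_upwards [hopen.mem_nhds hx] with y hy using (hd1 hy).deriv
      exact ((hd2 hx).differentiableAt.congr_of_eventuallyEq hev).differentiableWithinAt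
    · rw [interior_Ioo]
      intro x hx
      have hev : deriv h =ᶠ[nhds x] (fun x => 2*(x⁻¹ - Real.cos (π*x)*π / Real.sin (π*x))) := by
        filter_upwards [hopen.mem_nhds hx] with y hy using (hd1 hy).deriv
      have h2 : deriv (deriv h) x = 2*(π^2 / Real.sin (π*x)^2 - (x^2)⁻¹) := by
        rw [hev.deriv_eq]
        exact (hd2 hx).deriv
      simp only [Function.iterate_succ, Function.iterate_zero, Function.comp_apply, id]
      rw [h2]
      have hs := sinp_pos hx
      have hle : Real.sin (π*x) ≤ π*x := Real.sin_le (by nlinarith [Real.pi_pos, hx.1])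
      have key : (x^2)⁻¹ ≤ π^2 / Real.sin (π*x)^2 := by
        rw [inv_eq_one_div, div_le_div_iff₀ (pow_pos hx.1 2) (pow_pos hs 2)]
        nlinarith [hx.1]
      linarith
  apply hconv.congr
  intro x hx
  have hs := sinp_pos hx
  have hcos : 1 - Real.cos (2*π*x) = 2*Real.sin (π*x)^2 := by
    have h1 := Real.cos_two_mul (π*x)
    have h2 := Real.sin_sq_add_cos_sq (π*x)
    rw [show 2*π*x = 2*(π*x) by ring]
    linarith
  have hx0 : x ≠ 0 := ne_of_gt hx.1
  simp only [hh]
  rw [hcos, Real.log_div (pow_ne_zero _ hx0) (by positivity),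
    Real.log_mul (two_ne_zero) (by positivity), Real.log_pow, Real.log_pow]
  push_cast
  ring
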